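/- Let W : GL(n,ℚ_p) → ℂ satisfy (i) W(ug) = ψ(u)·W(g) for all u ∈ N_n and all g ∈ GL(n,ℚ_p), and (ii) W(gj) = ψ_m(j)·W(g) for all j ∈ J_m and all g ∈ GL(n,ℚ_p). If h ∈ GL(n−1,ℚ_p) and W(diag(h,1)) ≠ 0, then h ∈ N_{n−1}·B̄_{n−1,m}, where B̄_{n−1,m} is the subgroup of GL(n−1,ℚ_p) defined by the same recipe as B̄_{n,m} (i.e. lower triangular matrices in the conjugated congruence subgroup J_m of GL(n−1,ℚ_p)). -/

import Mathlib

open Matrix MeasureTheory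

noncomputable section

/-- The subgroup (as a set) of upper triangular unipotent matrices in `GL n`. -/
def NN (p n : ℕ) [Fact p.Prime] : Set (GL (Fin n) ℚ_[p]) :=
  {g | (∀ i, g.val i i = 1) ∧ ∀ i j : Fin n, j < i → g.val i j = 0}

/-- Lower triangular unipotent matrices in `GL n`. -/
def NNbar (p n : ℕ) [Fact p.Prime] : Set (GL (Fin n) ℚ_[p]) :=
  {g | (∀ i, g.val i i = 1) ∧ ∀ i j : Fin n, i < j → g.val i j = 0}

/-- Invertible diagonal matrices in `GL n`. -/
def AA (p n : ℕ) [Fact p.Prime] : Set (GL (Fin n) ℚ_[p]) :=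
  {g | ∀ i j : Fin n, i ≠ j → g.val i j = 0}

/-- Invertible lower triangular matrices in `GL n`. -/
def BBbar (p n : ℕ) [Fact p.Prime] : Set (GL (Fin n) ℚ_[p]) :=
  {g | ∀ i j : Fin n, i < j → g.val i j = 0}

/-- The congruence subgroup `K_n^m`: matrices `g` with all entries of `g - I` in `p^m ℤ_p`. -/
def Kcong (p n m : ℕ) [Fact p.Prime] : Set (GL (Fin n) ℚ_[p]) :=
  {g | ∀ i j : Fin n, ‖g.val i j - (1 : Matrix (Fin n) (Fin n) ℚ_[p]) i j‖ ≤ (p : ℝ) ^ (-(m : ℤ))}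

/-- The diagonal matrix `d = diag(1, p², p⁴, …, p^{2n-2})` as an element of `GL n`. -/
def dmat (p n : ℕ) [Fact p.Prime] : GL (Fin n) ℚ_[p] :=
  Matrix.GeneralLinearGroup.mkOfDetNeZero
    (Matrix.diagonal fun i : Fin n => (p : ℚ_[p]) ^ (2 * (i : ℕ)))
    (by
      rw [Matrix.det_diagonal]
      exact Finset.prod_ne_zero_iff.mpr fun i _ =>
        pow_ne_zero _ (Nat.cast_ne_zero.mpr (Fact.out : p.Prime).ne_zero))

/-- The compact open subgroup `J_m = d^m K_n^m d^{-m}`. -/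
def Jm (p n m : ℕ) [Fact p.Prime] : Set (GL (Fin n) ℚ_[p]) :=
  {g | ∃ k ∈ Kcong p n m, g = (dmat p n) ^ m * k * ((dmat p n) ^ m)⁻¹}

/-- The sum of the superdiagonal entries `Σ_{i=1}^{n-1} g_{i,i+1}` of a matrix. -/
def superSum {p : ℕ} [Fact p.Prime] {n : ℕ} (g : Matrix (Fin n) (Fin n) ℚ_[p]) : ℚ_[p] :=
  ∑ i : Fin n, if h : (i : ℕ) + 1 < n then g i ⟨(i : ℕ) + 1, h⟩ else 0

/-- The monoid homomorphism `A ↦ diag(A, 1)` from `n×n` matrices to `(n+1)×(n+1)` matrices. -/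
def embedHom (p n : ℕ) [Fact p.Prime] :
    Matrix (Fin n) (Fin n) ℚ_[p] →* Matrix (Fin (n + 1)) (Fin (n + 1)) ℚ_[p] where
  toFun A := (Matrix.reindexAlgEquiv ℚ_[p] ℚ_[p] finSumFinEquiv)
    (Matrix.fromBlocks A 0 0 (1 : Matrix (Fin 1) (Fin 1) ℚ_[p]))
  map_one' := by
    show (Matrix.reindexAlgEquiv ℚ_[p] ℚ_[p] finSumFinEquiv) _ = 1
    rw [Matrix.fromBlocks_one, _root_.map_one]
  map_mul' A B := by
    show (Matrix.reindexAlgEquiv ℚ_[p] ℚ_[p] finSumFinEquiv) _ =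
      (Matrix.reindexAlgEquiv ℚ_[p] ℚ_[p] finSumFinEquiv) _ *
        (Matrix.reindexAlgEquiv ℚ_[p] ℚ_[p] finSumFinEquiv) _
    rw [← _root_.map_mul]
    congr 1
    rw [Matrix.fromBlocks_multiply]
    simp

/-- The embedding `h ↦ diag(h, 1)` of `GL n` into `GL (n+1)`. -/
def embedGL {p n : ℕ} [Fact p.Prime] (g : GL (Fin n) ℚ_[p]) : GL (Fin (n + 1)) ℚ_[p] :=
  Units.map (embedHom p n) g


namespace St0Aux

variable {p : ℕ} [Fact p.Prime] {N : ℕ}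

/-- matrix equal to the identity except that row `r` is `v` -/
def rowMod (r : Fin N) (v : Fin N → ℚ_[p]) : Matrix (Fin N) (Fin N) ℚ_[p] :=
  fun i j => if i = r then v j else if i = j then 1 else 0

/-- matrix equal to the identity except that column `c` is `v` -/
def colMod (c : Fin N) (v : Fin N → ℚ_[p]) : Matrix (Fin N) (Fin N) ℚ_[p] :=
  fun i j => if j = c then v i else if i = j then 1 else 0

lemma sum_if_split (c : Fin N) (X Y : Fin N → ℚ_[p]) :
    ∑ k, (if k = c then X k else Y k) = X c - Y c + ∑ k, Y k := by
  have h : ∀ k ∈ Finset.univ, (if k = c then X k else Y k)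
      = (if k = c then X c - Y c else 0) + Y k := by
    intro k _
    by_cases h : k = c
    · subst h; simp
    · simp [h]
  rw [Finset.sum_congr rfl h, Finset.sum_add_distrib,
    Finset.sum_ite_eq' Finset.univ c (fun _ => X c - Y c)]
  simp

lemma colMod_mul (c : Fin N) (v : Fin N → ℚ_[p]) (A : Matrix (Fin N) (Fin N) ℚ_[p])
    (i j : Fin N) :
    (colMod c v * A) i j = (if i = c then 0 else A i j) + v i * A c j := by
  rw [Matrix.mul_apply]
  simp only [colMod, ite_mul, zero_mul, one_mul]
  rw [sum_if_split c (fun k => v i * A k j) (fun k => if i = k then A k j else 0)]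
  rw [Finset.sum_ite_eq Finset.univ i (fun k => A k j)]
  by_cases h : i = c
  · subst h; simp
  · simp [h]; ring

lemma mul_colMod (c : Fin N) (v : Fin N → ℚ_[p]) (A : Matrix (Fin N) (Fin N) ℚ_[p])
    (i j : Fin N) :
    (A * colMod c v) i j = if j = c then (∑ k, A i k * v k) else A i j := by
  rw [Matrix.mul_apply]
  by_cases h : j = c
  · subst h
    simp only [if_pos]
    refine Finset.sum_congr rfl fun k _ => ?_
    simp [colMod]
  · simp only [if_neg h]
    have : ∀ k ∈ Finset.univ, A i k * colMod c v k j = if k = j then A i k else 0 := by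
      intro k _
      by_cases hk : k = j
      · subst hk; simp [colMod, h]
      · simp [colMod, h, hk]
    rw [Finset.sum_congr rfl this, Finset.sum_ite_eq' Finset.univ j (fun k => A i k)]
    simp

lemma rowMod_mul (r : Fin N) (v : Fin N → ℚ_[p]) (A : Matrix (Fin N) (Fin N) ℚ_[p])
    (i j : Fin N) :
    (rowMod r v * A) i j = if i = r then (∑ k, v k * A k j) else A i j := by
  rw [Matrix.mul_apply]
  by_cases h : i = r
  · subst h
    simp only [if_pos]
    refine Finset.sum_congr rfl fun k _ => ?_
    simp [rowMod]
  · simp only [if_neg h]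
    have : ∀ k ∈ Finset.univ, rowMod r v i k * A k j = if k = i then A k j else 0 := by
      intro k _
      by_cases hk : k = i
      · subst hk; simp [rowMod, h]
      · simp [rowMod, h, hk, Ne.symm hk]
    rw [Finset.sum_congr rfl this, Finset.sum_ite_eq' Finset.univ i (fun k => A k j)]
    simp

lemma mul_rowMod (r : Fin N) (v : Fin N → ℚ_[p]) (A : Matrix (Fin N) (Fin N) ℚ_[p])
    (i j : Fin N) :
    (A * rowMod r v) i j = (if j = r then 0 else A i j) + A i r * v j := by
  rw [Matrix.mul_apply]
  simp only [rowMod, mul_ite, mul_zero, mul_one]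
  rw [sum_if_split r (fun k => A i k * v j) (fun k => if k = j then A i k else 0)]
  rw [Finset.sum_ite_eq' Finset.univ j (fun k => A i k)]
  by_cases h : j = r
  · subst h; simp
  · simp [h, Ne.symm h]; ring

/-- unit whose value is `colMod c v` with `v c = 1` -/
def colModUnit (c : Fin N) (x : Fin N → ℚ_[p]) : GL (Fin N) ℚ_[p] :=
  ⟨colMod c (fun i => if i = c then 1 else x i),
   colMod c (fun i => if i = c then 1 else -x i),
   by
    ext i j
    rw [colMod_mul]
    by_cases hj : j = c <;> by_cases hi : i = c <;>
      simp [colMod, hi, hj, Matrix.one_apply] <;>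
      (try subst hi) <;> (try subst hj) <;> simp_all [eq_comm] <;> ring,
   by
    ext i j
    rw [colMod_mul]
    by_cases hj : j = c <;> by_cases hi : i = c <;>
      simp [colMod, hi, hj, Matrix.one_apply] <;>
      (try subst hi) <;> (try subst hj) <;> simp_all [eq_comm] <;> ring⟩

lemma colModUnit_val (c : Fin N) (x : Fin N → ℚ_[p]) :
    (colModUnit c x).val = colMod c (fun i => if i = c then 1 else x i) := rfl

lemma colModUnit_inv (c : Fin N) (x : Fin N → ℚ_[p]) :
    ((colModUnit c x)⁻¹).val = colMod c (fun i => if i = c then 1 else -x i) := rfl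

/-- unit whose value is `rowMod r v` with `v r ≠ 0` -/
def rowModUnit (r : Fin N) (v : Fin N → ℚ_[p]) (hv : v r ≠ 0) : GL (Fin N) ℚ_[p] :=
  ⟨rowMod r v,
   rowMod r (fun j => if j = r then (v r)⁻¹ else -(v j) * (v r)⁻¹),
   by
    ext i j
    rw [rowMod_mul]
    by_cases hi : i = r
    · rw [if_pos hi]
      have : ∀ k ∈ Finset.univ, v k * rowMod r (fun j => if j = r then (v r)⁻¹ else -(v j) * (v r)⁻¹) k j
          = if k = r then v k * (if j = r then (v r)⁻¹ else -(v j) * (v r)⁻¹) else (if k = j then v k else 0) := by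
        intro k _
        by_cases hk : k = r <;> by_cases hkj : k = j <;> simp [rowMod, hk, hkj]
      rw [Finset.sum_congr rfl this,
        sum_if_split r (fun k => v k * (if j = r then (v r)⁻¹ else -(v j) * (v r)⁻¹)) (fun k => if k = j then v k else 0),
        Finset.sum_ite_eq' Finset.univ j v]
      by_cases hj : j = r
      · subst hj; subst hi; simp [Matrix.one_apply]; field_simp
      · subst hi; simp [hj, Ne.symm hj, Matrix.one_apply, fun hh : i = j => hj hh.symm]
        field_simp
        ring
    · rw [if_neg hi]
      simp [rowMod, hi, Matrix.one_apply],
   by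
    ext i j
    rw [rowMod_mul]
    by_cases hi : i = r
    · rw [if_pos hi]
      have : ∀ k ∈ Finset.univ, (if k = r then (v r)⁻¹ else -(v k) * (v r)⁻¹) * rowMod r v k j
          = if k = r then (v r)⁻¹ * v j else (if k = j then -(v k) * (v r)⁻¹ else 0) := by
        intro k _
        by_cases hk : k = r
        · subst hk; simp [rowMod]
        · by_cases hkj : k = j
          · subst hkj; simp [rowMod, hk]
          · simp [rowMod, hk, hkj]
      rw [Finset.sum_congr rfl this,
        sum_if_split r (fun _ => (v r)⁻¹ * v j) (fun k => if k = j then -(v k) * (v r)⁻¹ else 0),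
        Finset.sum_ite_eq' Finset.univ j (fun k => -(v k) * (v r)⁻¹)]
      by_cases hj : j = r
      · subst hj; subst hi; simp [Matrix.one_apply]; field_simp
      · subst hi; simp [hj, Ne.symm hj, Matrix.one_apply]
        field_simp
        ring
    · rw [if_neg hi]
      simp [rowMod, hi, Matrix.one_apply]⟩

lemma rowModUnit_val (r : Fin N) (v : Fin N → ℚ_[p]) (hv : v r ≠ 0) :
    (rowModUnit r v hv).val = rowMod r v := rfl

lemma rowModUnit_inv (r : Fin N) (v : Fin N → ℚ_[p]) (hv : v r ≠ 0) :
    ((rowModUnit r v hv)⁻¹).val = rowMod r (fun j => if j = r then (v r)⁻¹ else -(v j) * (v r)⁻¹) := rfl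
lemma superSum_one : superSum (1 : Matrix (Fin N) (Fin N) ℚ_[p]) = 0 := by
  unfold superSum
  apply Finset.sum_eq_zero
  intro i _
  split
  · exact Matrix.one_apply_ne (by simp [Fin.ext_iff]; try omega)
  · rfl

lemma superSum_colMod (c k : Fin N) (hk : (k : ℕ) + 1 = (c : ℕ)) (v : Fin N → ℚ_[p]) :
    superSum (colMod c v) = v k := by
  unfold superSum
  rw [Finset.sum_eq_single k]
  · have hlt : (k : ℕ) + 1 < N := by rw [hk]; exact c.isLt
    rw [dif_pos hlt]
    have : (⟨(k : ℕ) + 1, hlt⟩ : Fin N) = c := by rw [Fin.ext_iff]; exact hk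
    rw [this]
    simp [colMod]
  · intro i _ hi
    split
    · rename_i hlt
      have h1 : (⟨(i : ℕ) + 1, hlt⟩ : Fin N) ≠ c := by
        intro hh
        apply hi
        rw [Fin.ext_iff] at hh ⊢
        simp at hh
        omega
      have h2 : i ≠ (⟨(i : ℕ) + 1, hlt⟩ : Fin N) := by simp [Fin.ext_iff]
      simp [colMod, h1, h2]
    · rfl
  · intro h; exact absurd (Finset.mem_univ _) h

lemma psi_ne_zero (ψ : AddChar ℚ_[p] ℂ) (a : ℚ_[p]) : ψ a ≠ 0 := by
  intro h
  have h1 : (1 : ℂ) = ψ a * ψ (-a) := by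
    rw [← AddChar.map_add_eq_mul, add_neg_cancel, AddChar.map_zero_eq_one]
  rw [h, zero_mul] at h1
  exact one_ne_zero h1

lemma psi_sub_eq_one (ψ : AddChar ℚ_[p] ℂ) {a b : ℚ_[p]} (h : ψ a = ψ b) : ψ (a - b) = 1 := by
  have h2 : ψ (a - b) * ψ b = 1 * ψ b := by
    rw [← AddChar.map_add_eq_mul, sub_add_cancel, one_mul, h]
  exact mul_right_cancel₀ (psi_ne_zero ψ b) h2

lemma norm_sum_le_padic {ι : Type*} (s : Finset ι) (f : ι → ℚ_[p]) (C : ℝ) (hC : 0 ≤ C)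
    (h : ∀ i ∈ s, ‖f i‖ ≤ C) : ‖∑ i ∈ s, f i‖ ≤ C := by
  classical
  induction s using Finset.induction with
  | empty => simpa using hC
  | insert a s' hx ih =>
    rw [Finset.sum_insert hx]
    exact le_trans (Padic.nonarchimedean _ _)
      (max_le (h _ (Finset.mem_insert_self _ _)) (ih fun i hi => h i (Finset.mem_insert_of_mem hi)))

lemma norm_le_of_psi (ψ : AddChar ℚ_[p] ℂ)
    (hψnontriv : ∃ x : ℚ_[p], ‖x‖ ≤ (p : ℝ) ∧ ψ x ≠ 1)
    (c : ℚ_[p]) (M : ℤ) (h : ∀ t : ℚ_[p], ‖t‖ ≤ (p : ℝ) ^ M → ψ (t * c) = 1) :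
    ‖c‖ ≤ (p : ℝ) ^ (-M) := by
  have hp1 : (1 : ℝ) < (p : ℝ) := by exact_mod_cast (Fact.out : p.Prime).one_lt
  have hp0 : (0 : ℝ) < (p : ℝ) := by linarith
  by_contra hc
  obtain ⟨x, hx, hx1⟩ := hψnontriv
  have hc0 : c ≠ 0 := by
    intro h0
    apply hc
    rw [h0, norm_zero]
    positivity
  have hlow : (p : ℝ) ^ (-M + 1) ≤ ‖c‖ := by
    have := mt (Padic.norm_le_pow_iff_norm_lt_pow_add_one c (-M)).mpr hc
    linarith [not_lt.mp this]
  apply hx1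
  have hform : x = (x * c⁻¹) * c := by field_simp
  rw [hform]
  apply h
  rw [norm_mul, norm_inv]
  have hcpos : (0 : ℝ) < ‖c‖ := norm_pos_iff.mpr hc0
  have h2 : ‖x‖ * ‖c‖⁻¹ ≤ (p : ℝ) * ((p : ℝ) ^ (-M + 1))⁻¹ := by
    apply mul_le_mul hx _ (inv_nonneg.mpr (le_of_lt hcpos)) (le_of_lt hp0)
    exact inv_anti₀ (zpow_pos hp0 _) hlow
  refine le_trans h2 (le_of_eq ?_)
  rw [← _root_.zpow_neg, show -(-M+1) = M - 1 by ring, zpow_sub_one₀ (ne_of_gt hp0)]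
  field_simp
lemma pQ_ne : ((p : ℚ_[p]) : ℚ_[p]) ≠ 0 :=
  Nat.cast_ne_zero.mpr (Fact.out : p.Prime).ne_zero

/-- The unit `d^m` as an explicit diagonal unit. -/
def ddiag (p N : ℕ) [Fact p.Prime] (m : ℕ) : GL (Fin N) ℚ_[p] :=
  ⟨Matrix.diagonal (fun i : Fin N => (p : ℚ_[p]) ^ (2 * m * (i : ℕ))),
   Matrix.diagonal (fun i : Fin N => ((p : ℚ_[p]) ^ (2 * m * (i : ℕ)))⁻¹),
   by
    rw [Matrix.diagonal_mul_diagonal]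
    rw [show (fun i : Fin N => (p : ℚ_[p]) ^ (2 * m * (i : ℕ)) * ((p : ℚ_[p]) ^ (2 * m * (i : ℕ)))⁻¹)
        = fun _ => (1 : ℚ_[p]) from funext fun i => mul_inv_cancel₀ (pow_ne_zero _ pQ_ne)]
    exact Matrix.diagonal_one,
   by
    rw [Matrix.diagonal_mul_diagonal]
    rw [show (fun i : Fin N => ((p : ℚ_[p]) ^ (2 * m * (i : ℕ)))⁻¹ * (p : ℚ_[p]) ^ (2 * m * (i : ℕ)))
        = fun _ => (1 : ℚ_[p]) from funext fun i => inv_mul_cancel₀ (pow_ne_zero _ pQ_ne)]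
    exact Matrix.diagonal_one⟩

lemma dmat_pow (m : ℕ) : (dmat p N) ^ m = ddiag p N m := by
  apply Units.ext
  rw [Units.val_pow_eq_pow_val]
  have h1 : (dmat p N).val = Matrix.diagonal (fun i : Fin N => (p : ℚ_[p]) ^ (2 * (i : ℕ))) := rfl
  have h4 : (ddiag p N m).val
      = Matrix.diagonal (fun i : Fin N => (p : ℚ_[p]) ^ (2 * m * (i : ℕ))) := rfl
  have h5 : ((fun i : Fin N => (p : ℚ_[p]) ^ (2 * (i : ℕ))) ^ m)
      = fun i : Fin N => (p : ℚ_[p]) ^ (2 * m * (i : ℕ)) := by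
    funext i
    rw [Pi.pow_apply, ← pow_mul]
    congr 1
    ring
  rw [h1, Matrix.diagonal_pow, h5, h4]

lemma fdiag_norm (a b : ℕ) :
    ‖(p : ℚ_[p]) ^ a * ((p : ℚ_[p]) ^ b)⁻¹‖ = (p : ℝ) ^ ((b : ℤ) - (a : ℤ)) := by
  rw [← zpow_natCast (p : ℚ_[p]) a, ← zpow_natCast (p : ℚ_[p]) b, ← _root_.zpow_neg,
    ← zpow_add₀ pQ_ne, Padic.norm_p_zpow]
  congr 1
  ring

lemma Jm_char (m : ℕ) (g : GL (Fin N) ℚ_[p]) :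
    g ∈ Jm p N m ↔ ∀ i j : Fin N,
      ‖g.val i j - (if i = j then 1 else 0)‖
        ≤ (p : ℝ) ^ (2 * (m : ℤ) * ((j : ℕ) : ℤ) - 2 * (m : ℤ) * ((i : ℕ) : ℤ) - (m : ℤ)) := by
  have hp0 : (0 : ℝ) < (p : ℝ) := by exact_mod_cast (Fact.out : p.Prime).pos
  have hf0 : ∀ i : Fin N, (p : ℚ_[p]) ^ (2 * m * (i : ℕ)) ≠ 0 := fun i => pow_ne_zero _ pQ_ne
  have h3 : (ddiag p N m).val
      = Matrix.diagonal (fun i : Fin N => (p : ℚ_[p]) ^ (2 * m * (i : ℕ))) := rfl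
  have h2 : ((ddiag p N m)⁻¹).val
      = Matrix.diagonal (fun i : Fin N => ((p : ℚ_[p]) ^ (2 * m * (i : ℕ)))⁻¹) := rfl
  constructor
  · rintro ⟨k, hk, rfl⟩ i j
    rw [dmat_pow]
    have hval : ((ddiag p N m) * k * ((ddiag p N m)⁻¹)).val i j
        = (p : ℚ_[p]) ^ (2 * m * (i : ℕ)) * k.val i j * ((p : ℚ_[p]) ^ (2 * m * (j : ℕ)))⁻¹ := by
      show ((ddiag p N m).val * k.val * ((ddiag p N m)⁻¹).val) i j = _
      rw [h2, h3, Matrix.mul_diagonal, Matrix.diagonal_mul]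
    rw [hval]
    have hid : (p : ℚ_[p]) ^ (2 * m * (i : ℕ)) * k.val i j * ((p : ℚ_[p]) ^ (2 * m * (j : ℕ)))⁻¹
          - (if i = j then 1 else 0)
        = ((p : ℚ_[p]) ^ (2 * m * (i : ℕ)) * ((p : ℚ_[p]) ^ (2 * m * (j : ℕ)))⁻¹)
          * (k.val i j - (if i = j then 1 else 0)) := by
      by_cases hij : i = j
      · subst hij
        rw [if_pos rfl]
        have h1 : (p : ℚ_[p]) ^ (2 * m * (i : ℕ)) * ((p : ℚ_[p]) ^ (2 * m * (i : ℕ)))⁻¹ = 1 :=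
          mul_inv_cancel₀ (hf0 i)
        linear_combination h1
      · rw [if_neg hij]
        ring
    rw [hid, norm_mul, fdiag_norm]
    have hkb := hk i j
    rw [Matrix.one_apply] at hkb
    calc (p : ℝ) ^ (((2 * m * (j : ℕ) : ℕ) : ℤ) - ((2 * m * (i : ℕ) : ℕ) : ℤ))
          * ‖k.val i j - (if i = j then 1 else 0)‖
        ≤ (p : ℝ) ^ (((2 * m * (j : ℕ) : ℕ) : ℤ) - ((2 * m * (i : ℕ) : ℕ) : ℤ))
          * (p : ℝ) ^ (-(m : ℤ)) :=
          mul_le_mul_of_nonneg_left hkb (zpow_nonneg (le_of_lt hp0) _)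
      _ = (p : ℝ) ^ (2 * (m : ℤ) * ((j : ℕ) : ℤ) - 2 * (m : ℤ) * ((i : ℕ) : ℤ) - (m : ℤ)) := by
          rw [← zpow_add₀ (ne_of_gt hp0)]
          congr 1 <;> push_cast <;> try ring
  · intro hb
    refine ⟨(ddiag p N m)⁻¹ * g * (ddiag p N m), ?_, ?_⟩
    · intro i j
      have hval : ((ddiag p N m)⁻¹ * g * (ddiag p N m)).val i j
          = ((p : ℚ_[p]) ^ (2 * m * (i : ℕ)))⁻¹ * g.val i j * (p : ℚ_[p]) ^ (2 * m * (j : ℕ)) := by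
        show (((ddiag p N m)⁻¹).val * g.val * (ddiag p N m).val) i j = _
        rw [h2, h3, Matrix.mul_diagonal, Matrix.diagonal_mul]
      rw [hval, Matrix.one_apply]
      have hid : ((p : ℚ_[p]) ^ (2 * m * (i : ℕ)))⁻¹ * g.val i j * (p : ℚ_[p]) ^ (2 * m * (j : ℕ))
            - (if i = j then 1 else 0)
          = ((p : ℚ_[p]) ^ (2 * m * (j : ℕ)) * ((p : ℚ_[p]) ^ (2 * m * (i : ℕ)))⁻¹)
            * (g.val i j - (if i = j then 1 else 0)) := by
        by_cases hij : i = j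
        · subst hij
          rw [if_pos rfl]
          have h1 : ((p : ℚ_[p]) ^ (2 * m * (i : ℕ)))⁻¹ * (p : ℚ_[p]) ^ (2 * m * (i : ℕ)) = 1 :=
            inv_mul_cancel₀ (hf0 i)
          linear_combination h1
        · rw [if_neg hij]
          ring
      rw [hid, norm_mul, fdiag_norm]
      calc (p : ℝ) ^ (((2 * m * (i : ℕ) : ℕ) : ℤ) - ((2 * m * (j : ℕ) : ℕ) : ℤ))
            * ‖g.val i j - (if i = j then 1 else 0)‖
          ≤ (p : ℝ) ^ (((2 * m * (i : ℕ) : ℕ) : ℤ) - ((2 * m * (j : ℕ) : ℕ) : ℤ))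
            * (p : ℝ) ^ (2 * (m : ℤ) * ((j : ℕ) : ℤ) - 2 * (m : ℤ) * ((i : ℕ) : ℤ) - (m : ℤ)) :=
            mul_le_mul_of_nonneg_left (hb i j) (zpow_nonneg (le_of_lt hp0) _)
        _ = (p : ℝ) ^ (-(m : ℤ)) := by
            rw [← zpow_add₀ (ne_of_gt hp0)]
            congr 1 <;> push_cast <;> try ring
    · rw [dmat_pow]
      group
lemma NN_one : (1 : GL (Fin N) ℚ_[p]) ∈ NN p N := by
  constructor
  · intro i; rw [Units.val_one]; exact Matrix.one_apply_eq i
  · intro i j hj; rw [Units.val_one]; exact Matrix.one_apply_ne (Ne.symm (ne_of_lt hj))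

lemma BBbar_one : (1 : GL (Fin N) ℚ_[p]) ∈ BBbar p N := by
  intro i j hj; rw [Units.val_one]; exact Matrix.one_apply_ne (ne_of_lt hj)

lemma Jm_one (m : ℕ) : (1 : GL (Fin N) ℚ_[p]) ∈ Jm p N m := by
  rw [Jm_char]
  intro i j
  rw [Units.val_one, Matrix.one_apply, sub_self, norm_zero]
  positivity

lemma NN_mul {u v : GL (Fin N) ℚ_[p]} (hu : u ∈ NN p N) (hv : v ∈ NN p N) :
    u * v ∈ NN p N := by
  constructor
  · intro i
    rw [Units.val_mul, Matrix.mul_apply]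
    rw [Finset.sum_eq_single i]
    · rw [hu.1 i, hv.1 i, one_mul]
    · intro k _ hk
      rcases lt_trichotomy k i with h | h | h
      · rw [hu.2 i k h, zero_mul]
      · exact absurd h hk
      · rw [hv.2 k i h, mul_zero]
    · intro h; exact absurd (Finset.mem_univ _) h
  · intro i j hji
    rw [Units.val_mul, Matrix.mul_apply]
    apply Finset.sum_eq_zero
    intro k _
    by_cases hk : k < i
    · rw [hu.2 i k hk, zero_mul]
    · rw [hv.2 k j (lt_of_lt_of_le hji (not_lt.mp hk)), mul_zero]

lemma BBbar_mul {u v : GL (Fin N) ℚ_[p]} (hu : u ∈ BBbar p N) (hv : v ∈ BBbar p N) :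
    u * v ∈ BBbar p N := by
  intro i j hij
  rw [Units.val_mul, Matrix.mul_apply]
  apply Finset.sum_eq_zero
  intro k _
  by_cases hk : i < k
  · rw [hu i k hk, zero_mul]
  · rw [hv k j (lt_of_le_of_lt (not_lt.mp hk) hij), mul_zero]

lemma Jm_mul {m : ℕ} {g g' : GL (Fin N) ℚ_[p]} (hg : g ∈ Jm p N m) (hg' : g' ∈ Jm p N m) :
    g * g' ∈ Jm p N m := by
  have hp1 : (1 : ℝ) ≤ (p : ℝ) := by exact_mod_cast le_of_lt (Fact.out : p.Prime).one_lt
  have hp0 : (0 : ℝ) < (p : ℝ) := by linarith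
  rw [Jm_char] at hg hg' ⊢
  intro i j
  set D : Matrix (Fin N) (Fin N) ℚ_[p] := fun a b => if a = b then 1 else 0 with hD
  have key : (g * g').val i j - D i j
      = (∑ k, (g.val i k - D i k) * (g'.val k j - D k j))
        + ((g.val i j - D i j) + (g'.val i j - D i j)) := by
    rw [Units.val_mul, Matrix.mul_apply]
    have expand : ∀ k ∈ Finset.univ, (g.val i k - D i k) * (g'.val k j - D k j)
        = g.val i k * g'.val k j - g.val i k * D k j - D i k * g'.val k j + D i k * D k j :=
      fun k _ => by ring
    rw [Finset.sum_congr rfl expand]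
    have e1 : ∑ k, (g.val i k * g'.val k j - g.val i k * D k j - D i k * g'.val k j
        + D i k * D k j) = (∑ k, g.val i k * g'.val k j) - (∑ k, g.val i k * D k j)
        - (∑ k, D i k * g'.val k j) + (∑ k, D i k * D k j) := by
      rw [Finset.sum_add_distrib, Finset.sum_sub_distrib, Finset.sum_sub_distrib]
    rw [e1]
    have e2 : ∑ k, g.val i k * D k j = g.val i j := by
      have : ∀ k ∈ Finset.univ, g.val i k * D k j = if k = j then g.val i k else 0 := by
        intro k _; by_cases hk : k = j <;> simp [hD, hk]
      rw [Finset.sum_congr rfl this, Finset.sum_ite_eq' Finset.univ j (fun k => g.val i k)]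
      simp
    have e3 : ∑ k, D i k * g'.val k j = g'.val i j := by
      have : ∀ k ∈ Finset.univ, D i k * g'.val k j = if i = k then g'.val k j else 0 := by
        intro k _; by_cases hk : i = k <;> simp [hD, hk]
      rw [Finset.sum_congr rfl this, Finset.sum_ite_eq Finset.univ i (fun k => g'.val k j)]
      simp
    have e4 : ∑ k, D i k * D k j = D i j := by
      have : ∀ k ∈ Finset.univ, D i k * D k j = if i = k then D k j else 0 := by
        intro k _; by_cases hk : i = k <;> simp [hD, hk]
      rw [Finset.sum_congr rfl this, Finset.sum_ite_eq Finset.univ i (fun k => D k j)]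
      simp
    rw [e2, e3, e4]
    ring
  show ‖(g * g').val i j - D i j‖ ≤ _
  rw [key]
  have hm0 : (0 : ℤ) ≤ (m : ℤ) := Int.natCast_nonneg m
  refine le_trans (Padic.nonarchimedean _ _) (max_le ?_ ?_)
  · apply norm_sum_le_padic _ _ _ (by positivity)
    intro k _
    rw [norm_mul]
    calc ‖g.val i k - D i k‖ * ‖g'.val k j - D k j‖
        ≤ (p : ℝ) ^ (2 * (m : ℤ) * ((k : ℕ) : ℤ) - 2 * (m : ℤ) * ((i : ℕ) : ℤ) - (m : ℤ))
          * (p : ℝ) ^ (2 * (m : ℤ) * ((j : ℕ) : ℤ) - 2 * (m : ℤ) * ((k : ℕ) : ℤ) - (m : ℤ)) :=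
          mul_le_mul (hg i k) (hg' k j) (norm_nonneg _) (zpow_nonneg (le_of_lt hp0) _)
      _ = (p : ℝ) ^ (2 * (m : ℤ) * ((j : ℕ) : ℤ) - 2 * (m : ℤ) * ((i : ℕ) : ℤ) - 2 * (m : ℤ)) := by
          rw [← zpow_add₀ (ne_of_gt hp0)]
          congr 1
          ring
      _ ≤ (p : ℝ) ^ (2 * (m : ℤ) * ((j : ℕ) : ℤ) - 2 * (m : ℤ) * ((i : ℕ) : ℤ) - (m : ℤ)) := by
          apply zpow_le_zpow_right₀ hp1
          linarith
  · exact le_trans (Padic.nonarchimedean _ _) (max_le (hg i j) (hg' i j))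

/-- block-diagonal shape: identity outside the top-left `s × s` block -/
def BDM (s : ℕ) (A : Matrix (Fin N) (Fin N) ℚ_[p]) : Prop :=
  ∀ i j : Fin N, (s ≤ (i : ℕ) ∨ s ≤ (j : ℕ)) → A i j = if i = j then 1 else 0

lemma BDM_one (s : ℕ) : BDM (p := p) (N := N) s 1 := fun _ _ _ => Matrix.one_apply

lemma BDM_mul {s : ℕ} {A B : Matrix (Fin N) (Fin N) ℚ_[p]} (hA : BDM s A) (hB : BDM s B) :
    BDM s (A * B) := by
  intro i j hij
  rw [Matrix.mul_apply]
  rcases hij with hi | hj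
  · have : ∀ k ∈ Finset.univ, A i k * B k j = if i = k then B k j else 0 := by
      intro k _
      rw [hA i k (Or.inl hi)]
      by_cases hk : i = k <;> simp [hk]
    rw [Finset.sum_congr rfl this, Finset.sum_ite_eq Finset.univ i (fun k => B k j)]
    simp [hB i j (Or.inl hi)]
  · have : ∀ k ∈ Finset.univ, A i k * B k j = if k = j then A i k else 0 := by
      intro k _
      rw [hB k j (Or.inr hj)]
      by_cases hk : k = j <;> simp [hk]
    rw [Finset.sum_congr rfl this, Finset.sum_ite_eq' Finset.univ j (fun k => A i k)]
    simp [hA i j (Or.inr hj)]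

lemma BDM_mono {s t : ℕ} (hst : s ≤ t) {A : Matrix (Fin N) (Fin N) ℚ_[p]} (hA : BDM s A) :
    BDM t A := by
  intro i j hij
  apply hA
  rcases hij with h | h
  · exact Or.inl (le_trans hst h)
  · exact Or.inr (le_trans hst h)
lemma key (p n m : ℕ) [Fact p.Prime] (hm : 1 ≤ m)
    (ψ : AddChar ℚ_[p] ℂ)
    (hψnontriv : ∃ x : ℚ_[p], ‖x‖ ≤ (p : ℝ) ∧ ψ x ≠ 1)
    (W : GL (Fin (n + 1)) ℚ_[p] → ℂ)
    (hW1 : ∀ u ∈ NN p (n + 1), ∀ g : GL (Fin (n + 1)) ℚ_[p],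
      W (u * g) = ψ (superSum u.val) * W g)
    (hW2 : ∀ g : GL (Fin (n + 1)) ℚ_[p],
      ∀ b ∈ BBbar p (n + 1) ∩ Jm p (n + 1) m, ∀ u ∈ NN p (n + 1) ∩ Jm p (n + 1) m,
        W (g * (b * u)) = ψ (superSum u.val) * W g) :
    ∀ q : ℕ, q ≤ n → ∀ g : GL (Fin (n + 1)) ℚ_[p], BDM q g.val → W g ≠ 0 →
      ∃ u b : GL (Fin (n + 1)) ℚ_[p], u ∈ NN p (n + 1) ∧ b ∈ BBbar p (n + 1) ∩ Jm p (n + 1) m ∧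
        BDM q u.val ∧ BDM q b.val ∧ g = u * b := by
  have hp1 : (1 : ℝ) < (p : ℝ) := by exact_mod_cast (Fact.out : p.Prime).one_lt
  intro q
  induction q with
  | zero =>
    intro _ g hg hW0
    refine ⟨1, 1, NN_one, ⟨BBbar_one, Jm_one m⟩,
      (by rw [Units.val_one]; exact BDM_one 0),
      (by rw [Units.val_one]; exact BDM_one 0), ?_⟩
    have hg1 : g = 1 := by
      apply Matrix.GeneralLinearGroup.ext
      intro i j
      show g.val i j = (1 : GL (Fin (n+1)) ℚ_[p]).val i j
      rw [hg i j (Or.inl (Nat.zero_le _)), Units.val_one, Matrix.one_apply]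
    rw [hg1, one_mul]
  | succ q IH =>
    intro hq g hg hW0
    set qF : Fin (n+1) := ⟨q, by omega⟩ with hqF
    set sF : Fin (n+1) := ⟨q+1, by omega⟩ with hsF
    have hqv : (qF : ℕ) = q := rfl
    have hsv : (sF : ℕ) = q + 1 := rfl
    have hqs : qF ≠ sF := Fin.ne_of_val_ne (by rw [hqv, hsv]; omega)
    have hqk : (qF : ℕ) + 1 = (sF : ℕ) := by rw [hqv, hsv]
    have honeN : (1 : GL (Fin (n+1)) ℚ_[p]) ∈ NN p (n+1) ∩ Jm p (n+1) m := ⟨NN_one, Jm_one m⟩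
    have honeB : (1 : GL (Fin (n+1)) ℚ_[p]) ∈ BBbar p (n+1) ∩ Jm p (n+1) m := ⟨BBbar_one, Jm_one m⟩
    have hrowS : ∀ jj, g.val sF jj = if sF = jj then 1 else 0 :=
      fun jj => hg sF jj (Or.inl (by rw [hsv]))
    have hcolS : ∀ ii, g.val ii sF = if ii = sF then 1 else 0 :=
      fun ii => hg ii sF (Or.inr (by rw [hsv]))
    -- Step A : congruence of row q of g
    have hrow : ∀ jF : Fin (n+1), (jF : ℕ) ≤ q →
        ‖g.val qF jF - (if qF = jF then 1 else 0)‖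
          ≤ (p : ℝ) ^ (2*(m:ℤ)*((jF:ℕ):ℤ) - 2*(m:ℤ)*((qF:ℕ):ℤ) - (m:ℤ)) := by
      intro jF hjq
      have hjs : jF ≠ sF := Fin.ne_of_val_ne (by rw [hsv]; omega)
      have hexp : (2*(m:ℤ)*((jF:ℕ):ℤ) - 2*(m:ℤ)*((qF:ℕ):ℤ) - (m:ℤ))
          = -(2*(m:ℤ)*((sF:ℕ):ℤ) - 2*(m:ℤ)*((jF:ℕ):ℤ) - (m:ℤ)) := by
        rw [hqv, hsv]
        push_cast
        ring
      rw [hexp]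
      apply norm_le_of_psi ψ hψnontriv _ _
      intro t ht
      set ju : GL (Fin (n+1)) ℚ_[p] := colModUnit sF (fun i => if i = jF then t else 0) with hju
      set uu : GL (Fin (n+1)) ℚ_[p] := colModUnit sF (fun a => t * g.val a jF) with huu
      have hjuNN : ju ∈ NN p (n+1) := by
        constructor
        · intro i
          rw [hju, colModUnit_val]
          by_cases hi : i = sF <;> simp [colMod, hi]
        · intro i j hj
          rw [hju, colModUnit_val]
          have hij : i ≠ j := Ne.symm (ne_of_lt hj)
          by_cases hjc : j = sF
          · subst hjc
            rw [Fin.lt_def, hsv] at hj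
            have h1 : i ≠ sF := Fin.ne_of_val_ne (by rw [hsv]; omega)
            have h2 : i ≠ jF := Fin.ne_of_val_ne (by omega)
            simp [colMod, h1, h2]
          · simp [colMod, hjc, hij]
      have huuNN : uu ∈ NN p (n+1) := by
        constructor
        · intro i
          rw [huu, colModUnit_val]
          by_cases hi : i = sF <;> simp [colMod, hi]
        · intro i j hj
          rw [huu, colModUnit_val]
          have hij : i ≠ j := Ne.symm (ne_of_lt hj)
          by_cases hjc : j = sF
          · subst hjc
            rw [Fin.lt_def, hsv] at hj
            have h1 : i ≠ sF := Fin.ne_of_val_ne (by rw [hsv]; omega)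
            have h3 := hg i jF (Or.inl (by omega))
            have h4 : i ≠ jF := Fin.ne_of_val_ne (by omega)
            rw [if_neg h4] at h3
            simp [colMod, h1, h3]
          · simp [colMod, hjc, hij]
      have hjuJm : ju ∈ Jm p (n+1) m := by
        rw [Jm_char]
        intro i j
        have hval : ju.val i j = if j = sF then (if i = sF then 1 else if i = jF then t else 0)
            else if i = j then 1 else 0 := by
          rw [hju, colModUnit_val]
          rfl
        rw [hval]
        by_cases hjc : j = sF
        · subst hjc
          rw [if_pos rfl]
          by_cases hi : i = sF
          · subst hi
            rw [if_pos rfl, if_pos rfl, sub_self, norm_zero]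
            positivity
          · rw [if_neg hi, if_neg hi, sub_zero]
            by_cases hij2 : i = jF
            · subst hij2
              rw [if_pos rfl]
              exact ht
            · rw [if_neg hij2, norm_zero]
              positivity
        · rw [if_neg hjc, sub_self, norm_zero]
          positivity
      have hcomm : uu * g = g * (1 * ju) := by
        rw [one_mul]
        apply Matrix.GeneralLinearGroup.ext
        intro i j
        show (uu * g).val i j = (g * ju).val i j
        rw [Units.val_mul, Units.val_mul, hju, huu, colModUnit_val, colModUnit_val,
          colMod_mul, mul_colMod]
        have hsum : ∑ k, g.val i k * (if k = sF then 1 else if k = jF then t else 0)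
            = g.val i sF + g.val i jF * t := by
          have hterm : ∀ k ∈ Finset.univ,
              g.val i k * (if k = sF then 1 else if k = jF then t else 0)
              = (if k = sF then g.val i k else 0) + (if k = jF then g.val i k * t else 0) := by
            intro k _
            by_cases h1 : k = sF
            · subst h1; simp [hjs, Ne.symm hjs]
            · by_cases h2 : k = jF <;> simp [h1, h2, hjs]
          rw [Finset.sum_congr rfl hterm, Finset.sum_add_distrib,
            Finset.sum_ite_eq' Finset.univ sF (fun k => g.val i k),
            Finset.sum_ite_eq' Finset.univ jF (fun k => g.val i k * t)]
          simp
        by_cases hi : i = sF <;> by_cases hj : j = sF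
        · subst hi; subst hj
          rw [if_pos rfl, if_pos rfl, if_pos rfl, hsum, hrowS jF, if_neg (Ne.symm hjs),
            hrowS sF, if_pos rfl]
          ring
        · subst hi
          rw [if_pos rfl, if_pos rfl, if_neg hj]
          ring
        · subst hj
          rw [if_neg hi, if_neg hi, if_pos rfl, hsum, hrowS sF, if_pos rfl]
          ring
        · rw [if_neg hi, if_neg hi, if_neg hj, hrowS j, if_neg (fun hh => hj hh.symm)]
          ring
      have e1 := hW1 uu huuNN g
      have e2 := hW2 g 1 honeB ju ⟨hjuNN, hjuJm⟩
      rw [← hcomm, e1] at e2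
      have hψeq := mul_right_cancel₀ hW0 e2
      have hsu : superSum uu.val = t * g.val qF jF := by
        rw [huu, colModUnit_val, superSum_colMod sF qF hqk]
        rw [if_neg hqs]
      have hsj : superSum ju.val = t * (if qF = jF then 1 else 0) := by
        rw [hju, colModUnit_val, superSum_colMod sF qF hqk]
        rw [if_neg hqs]
        by_cases h : qF = jF <;> simp [h]
      rw [hsu, hsj] at hψeq
      have hone := psi_sub_eq_one ψ hψeq
      rw [← mul_sub] at hone
      exact hone
    -- Step B : the lower-triangular unit built from row q of g
    have hγnorm := hrow qF (le_refl q)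
    rw [if_pos rfl] at hγnorm
    have hγ : g.val qF qF ≠ 0 := by
      intro h0
      rw [h0, zero_sub, norm_neg, norm_one] at hγnorm
      have hlt : (p:ℝ) ^ (2*(m:ℤ)*((qF:ℕ):ℤ) - 2*(m:ℤ)*((qF:ℕ):ℤ) - (m:ℤ)) < 1 := by
        rw [show (2*(m:ℤ)*((qF:ℕ):ℤ) - 2*(m:ℤ)*((qF:ℕ):ℤ) - (m:ℤ)) = -(m:ℤ) by ring,
          _root_.zpow_neg]
        have h2 : (1:ℝ) < (p:ℝ) ^ (m:ℤ) := one_lt_zpow₀ hp1 (by exact_mod_cast hm)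
        exact inv_lt_one_of_one_lt₀ h2
      linarith
    set bU : GL (Fin (n+1)) ℚ_[p] := rowModUnit qF (fun j => g.val qF j) hγ with hbU
    have hbUval : ∀ i j, bU.val i j
        = if i = qF then g.val qF j else if i = j then 1 else 0 := by
      intro i j
      rw [hbU, rowModUnit_val]
      rfl
    have hbUinv : ∀ i j, (bU⁻¹).val i j
        = if i = qF then (if j = qF then (g.val qF qF)⁻¹ else -(g.val qF j) * (g.val qF qF)⁻¹)
          else if i = j then 1 else 0 := by
      intro i j
      rw [hbU, rowModUnit_inv]
      rfl
    have hbB : bU ∈ BBbar p (n+1) := by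
      intro i j hij
      rw [hbUval]
      by_cases hi : i = qF
      · subst hi
        rw [if_pos rfl]
        rw [Fin.lt_def, hqv] at hij
        have hj2 : q + 1 ≤ (j:ℕ) := by omega
        have hqj : qF ≠ j := Fin.ne_of_val_ne (by rw [hqv]; omega)
        have h1 := hg qF j (Or.inr hj2)
        rw [if_neg hqj] at h1
        exact h1
      · rw [if_neg hi, if_neg (ne_of_lt hij)]
    have hbJ : bU ∈ Jm p (n+1) m := by
      rw [Jm_char]
      intro i j
      rw [hbUval]
      by_cases hi : i = qF
      · subst hi
        rw [if_pos rfl]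
        by_cases hjq2 : (j:ℕ) ≤ q
        · exact hrow j hjq2
        · have h2 : qF ≠ j := Fin.ne_of_val_ne (by rw [hqv]; omega)
          have h1 := hg qF j (Or.inr (by omega))
          rw [if_neg h2] at h1
          rw [h1, if_neg h2, sub_zero, norm_zero]
          positivity
      · rw [if_neg hi, sub_self, norm_zero]
        positivity
    set g' : GL (Fin (n+1)) ℚ_[p] := g * bU⁻¹ with hg'
    have hWg' : W g' = W g := by
      have h := hW2 g' bU ⟨hbB, hbJ⟩ 1 honeN
      rw [mul_one] at h
      have hgg : g' * bU = g := by rw [hg']; exact inv_mul_cancel_right g bU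
      rw [hgg, Units.val_one, superSum_one, AddChar.map_zero_eq_one, one_mul] at h
      exact h.symm
    have hWg'0 : W g' ≠ 0 := by rw [hWg']; exact hW0
    have hg'val : ∀ i j, g'.val i j = (if j = qF then 0 else g.val i j)
        + g.val i qF * (if j = qF then (g.val qF qF)⁻¹ else -(g.val qF j) * (g.val qF qF)⁻¹) := by
      intro i j
      have hv : g'.val = g.val * (bU⁻¹).val := by rw [hg', Units.val_mul]
      rw [hv, hbU, rowModUnit_inv, mul_rowMod]
    have hrow' : ∀ j, g'.val qF j = if qF = j then 1 else 0 := by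
      intro j
      rw [hg'val]
      by_cases hj : j = qF
      · subst hj
        rw [if_pos rfl, if_pos rfl, if_pos rfl, mul_inv_cancel₀ hγ, zero_add]
      · rw [if_neg hj, if_neg hj, if_neg (fun hh => hj hh.symm)]
        field_simp
        try ring
    have hbinvBD : BDM (q+1) ((bU⁻¹).val) := by
      intro i j hij
      rw [hbUinv]
      by_cases hi : i = qF
      · subst hi
        have hj2 : q + 1 ≤ (j:ℕ) := by
          rcases hij with h | h
          · rw [hqv] at h; omega
          · exact h
        have hqj : qF ≠ j := Fin.ne_of_val_ne (by rw [hqv]; omega)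
        have hjq' : j ≠ qF := Ne.symm hqj
        rw [if_pos rfl, if_neg hjq', if_neg hqj]
        have h1 := hg qF j (Or.inr hj2)
        rw [if_neg hqj] at h1
        rw [h1]
        ring
      · rw [if_neg hi]
    have hBD' : BDM (q+1) (g'.val) := by
      have hval : g'.val = g.val * (bU⁻¹).val := by rw [hg', Units.val_mul]
      rw [hval]
      exact BDM_mul hg hbinvBD
    -- Step D : peel off column q of g'
    set u2 : GL (Fin (n+1)) ℚ_[p] := colModUnit qF (fun i => g'.val i qF) with hu2
    have hu2val : ∀ i j, u2.val i j
        = if j = qF then (if i = qF then 1 else g'.val i qF) else if i = j then 1 else 0 := by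
      intro i j
      rw [hu2, colModUnit_val]
      rfl
    have hu2NN : u2 ∈ NN p (n+1) := by
      constructor
      · intro i
        rw [hu2val]
        by_cases hi : i = qF <;> simp [hi]
      · intro i j hj
        rw [hu2val]
        have hij : i ≠ j := Ne.symm (ne_of_lt hj)
        by_cases hjc : j = qF
        · subst hjc
          rw [Fin.lt_def, hqv] at hj
          have hi2 : q + 1 ≤ (i:ℕ) := by omega
          have hiq : i ≠ qF := Fin.ne_of_val_ne (by rw [hqv]; omega)
          have h1 := hBD' i qF (Or.inl hi2)
          rw [if_neg hiq] at h1
          rw [if_pos rfl, if_neg hiq, h1]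
        · rw [if_neg hjc, if_neg hij]
    set g2 : GL (Fin (n+1)) ℚ_[p] := u2⁻¹ * g' with hg2
    have hg2val : ∀ i j, g2.val i j = (if i = qF then 0 else g'.val i j)
        + (if i = qF then 1 else -(g'.val i qF)) * g'.val qF j := by
      intro i j
      have hv : g2.val = (u2⁻¹).val * g'.val := by rw [hg2, Units.val_mul]
      rw [hv, hu2, colModUnit_inv, colMod_mul]
    have hBD2 : BDM q (g2.val) := by
      intro i j hij
      rw [hg2val, hrow' j]
      by_cases hi : i = qF
      · subst hi; simp
      · rw [if_neg hi, if_neg hi]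
        by_cases hj : qF = j
        · subst hj
          rw [if_pos rfl, if_neg hi]
          ring
        · rw [if_neg hj, mul_zero, add_zero]
          have hcase : q + 1 ≤ (i:ℕ) ∨ q + 1 ≤ (j:ℕ) := by
            have hiv : (i:ℕ) ≠ q := fun hh => hi (Fin.ext_iff.mpr (by rw [hqv]; omega))
            have hjv : (j:ℕ) ≠ q := fun hh => hj (Fin.ext_iff.mpr (by rw [hqv]; omega))
            rcases hij with h | h
            · left; omega
            · right; omega
          exact hBD' i j hcase
    have hWg2 : W g2 ≠ 0 := by
      have h := hW1 u2 hu2NN g2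
      have hu2g2 : u2 * g2 = g' := by rw [hg2]; exact mul_inv_cancel_left u2 g'
      rw [hu2g2] at h
      intro h0
      rw [h0, mul_zero] at h
      exact hWg'0 h
    obtain ⟨u0, b0, hu0, hb0, hu0BD, hb0BD, hfac⟩ := IH (by omega) g2 hBD2 hWg2
    have hu2BD : BDM (q+1) (u2.val) := by
      intro i j hij
      rw [hu2val]
      by_cases hjc : j = qF
      · subst hjc
        have hi2 : q + 1 ≤ (i:ℕ) := by
          rcases hij with h | h
          · exact h
          · rw [hqv] at h; omega
        have hiq : i ≠ qF := Fin.ne_of_val_ne (by rw [hqv]; omega)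
        have h1 := hBD' i qF (Or.inl hi2)
        rw [if_neg hiq] at h1
        rw [if_pos rfl, if_neg hiq, h1, if_neg hiq]
      · rw [if_neg hjc]
    have hbUBD : BDM (q+1) (bU.val) := by
      intro i j hij
      rw [hbUval]
      by_cases hi : i = qF
      · subst hi
        have hj2 : q + 1 ≤ (j:ℕ) := by
          rcases hij with h | h
          · rw [hqv] at h; omega
          · exact h
        have hqj : qF ≠ j := Fin.ne_of_val_ne (by rw [hqv]; omega)
        have h1 := hg qF j (Or.inr hj2)
        rw [if_neg hqj] at h1
        rw [if_pos rfl, h1, if_neg hqj]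
      · rw [if_neg hi]
    refine ⟨u2 * u0, b0 * bU, NN_mul hu2NN hu0,
      ⟨BBbar_mul hb0.1 hbB, Jm_mul hb0.2 hbJ⟩, ?_, ?_, ?_⟩
    · rw [Units.val_mul]; exact BDM_mul hu2BD (BDM_mono (by omega) hu0BD)
    · rw [Units.val_mul]; exact BDM_mul (BDM_mono (by omega) hb0BD) hbUBD
    · have h1 : g = g' * bU := by rw [hg']; exact (inv_mul_cancel_right g bU).symm
      have h2 : g' = u2 * g2 := by rw [hg2]; exact (mul_inv_cancel_left u2 g').symm
      rw [h1, h2, hfac]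
      group
section Embed

variable (p n : ℕ) [Fact p.Prime]

lemma embed_cc (A : Matrix (Fin n) (Fin n) ℚ_[p]) (i j : Fin n) :
    embedHom p n A i.castSucc j.castSucc = A i j := by
  show (Matrix.reindexAlgEquiv ℚ_[p] ℚ_[p] finSumFinEquiv)
    (Matrix.fromBlocks A 0 0 (1 : Matrix (Fin 1) (Fin 1) ℚ_[p])) _ _ = _
  rw [Matrix.reindexAlgEquiv_apply, Matrix.reindex_apply, Matrix.submatrix_apply]
  rw [show (i.castSucc : Fin (n+1)) = Fin.castAdd 1 i from rfl,
    show (j.castSucc : Fin (n+1)) = Fin.castAdd 1 j from rfl,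
    finSumFinEquiv_symm_apply_castAdd, finSumFinEquiv_symm_apply_castAdd]
  rfl

lemma last_eq_natAdd : (Fin.last n : Fin (n+1)) = Fin.natAdd n (0 : Fin 1) := by
  rw [Fin.ext_iff]
  simp

lemma embed_ll (A : Matrix (Fin n) (Fin n) ℚ_[p]) :
    embedHom p n A (Fin.last n) (Fin.last n) = 1 := by
  show (Matrix.reindexAlgEquiv ℚ_[p] ℚ_[p] finSumFinEquiv)
    (Matrix.fromBlocks A 0 0 (1 : Matrix (Fin 1) (Fin 1) ℚ_[p])) _ _ = _
  rw [Matrix.reindexAlgEquiv_apply, Matrix.reindex_apply, Matrix.submatrix_apply,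
    last_eq_natAdd, finSumFinEquiv_symm_apply_natAdd]
  show (1 : Matrix (Fin 1) (Fin 1) ℚ_[p]) 0 0 = 1
  rw [Matrix.one_apply_eq]

lemma embed_cl (A : Matrix (Fin n) (Fin n) ℚ_[p]) (i : Fin n) :
    embedHom p n A i.castSucc (Fin.last n) = 0 := by
  show (Matrix.reindexAlgEquiv ℚ_[p] ℚ_[p] finSumFinEquiv)
    (Matrix.fromBlocks A 0 0 (1 : Matrix (Fin 1) (Fin 1) ℚ_[p])) _ _ = _
  rw [Matrix.reindexAlgEquiv_apply, Matrix.reindex_apply, Matrix.submatrix_apply,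
    last_eq_natAdd, finSumFinEquiv_symm_apply_natAdd,
    show (i.castSucc : Fin (n+1)) = Fin.castAdd 1 i from rfl,
    finSumFinEquiv_symm_apply_castAdd]
  rfl

lemma embed_lc (A : Matrix (Fin n) (Fin n) ℚ_[p]) (j : Fin n) :
    embedHom p n A (Fin.last n) j.castSucc = 0 := by
  show (Matrix.reindexAlgEquiv ℚ_[p] ℚ_[p] finSumFinEquiv)
    (Matrix.fromBlocks A 0 0 (1 : Matrix (Fin 1) (Fin 1) ℚ_[p])) _ _ = _
  rw [Matrix.reindexAlgEquiv_apply, Matrix.reindex_apply, Matrix.submatrix_apply,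
    last_eq_natAdd, finSumFinEquiv_symm_apply_natAdd,
    show (j.castSucc : Fin (n+1)) = Fin.castAdd 1 j from rfl,
    finSumFinEquiv_symm_apply_castAdd]
  rfl

lemma embedGL_val {p n : ℕ} [Fact p.Prime] (h : GL (Fin n) ℚ_[p]) :
    (embedGL h).val = embedHom p n h.val := rfl

lemma embedGL_BDM {p n : ℕ} [Fact p.Prime] (h : GL (Fin n) ℚ_[p]) :
    BDM n ((embedGL h).val) := by
  intro i j hij
  rw [embedGL_val]
  have hlast : i = Fin.last n ∨ j = Fin.last n := by
    rcases hij with hh | hh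
    · left; rw [Fin.ext_iff]; simp; omega
    · right; rw [Fin.ext_iff]; simp; omega
  rcases Fin.eq_castSucc_or_eq_last i with ⟨i0, rfl⟩ | rfl
  · rcases Fin.eq_castSucc_or_eq_last j with ⟨j0, rfl⟩ | rfl
    · exfalso
      rcases hlast with hh | hh
      · exact absurd (congrArg Fin.val hh) (by simp; omega)
      · exact absurd (congrArg Fin.val hh) (by simp; omega)
    · rw [embed_cl, if_neg (Fin.ne_of_val_ne (by simp; omega))]
  · rcases Fin.eq_castSucc_or_eq_last j with ⟨j0, rfl⟩ | rfl
    · rw [embed_lc, if_neg (Fin.ne_of_val_ne (by simp; omega))]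
    · rw [embed_ll, if_pos rfl]

/-- truncation of a block-diagonal element of `GL (n+1)` to `GL n` -/
def truncGL {p n : ℕ} [Fact p.Prime] (U : GL (Fin (n+1)) ℚ_[p]) (hU : BDM n U.val) :
    GL (Fin n) ℚ_[p] where
  val := fun i j => U.val i.castSucc j.castSucc
  inv := fun i j => U.inv i.castSucc j.castSucc
  val_inv := by
    ext i j
    change ∑ k : Fin n, U.val i.castSucc k.castSucc * U.inv k.castSucc j.castSucc
      = (1 : Matrix (Fin n) (Fin n) ℚ_[p]) i j
    have hfull : ∑ k : Fin (n+1), U.val i.castSucc k * U.inv k j.castSucc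
        = (1 : Matrix (Fin (n+1)) (Fin (n+1)) ℚ_[p]) i.castSucc j.castSucc := by
      rw [← Matrix.mul_apply, U.val_inv]
    rw [Fin.sum_univ_castSucc] at hfull
    rw [hU i.castSucc (Fin.last n) (Or.inr (by simp)), if_neg (Fin.ne_of_val_ne (by simp; omega)),
      zero_mul, add_zero] at hfull
    rw [hfull, Matrix.one_apply, Matrix.one_apply]
    simp [Fin.castSucc_inj]
  inv_val := by
    ext i j
    change ∑ k : Fin n, U.inv i.castSucc k.castSucc * U.val k.castSucc j.castSucc
      = (1 : Matrix (Fin n) (Fin n) ℚ_[p]) i j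
    have hfull : ∑ k : Fin (n+1), U.inv i.castSucc k * U.val k j.castSucc
        = (1 : Matrix (Fin (n+1)) (Fin (n+1)) ℚ_[p]) i.castSucc j.castSucc := by
      rw [← Matrix.mul_apply, U.inv_val]
    rw [Fin.sum_univ_castSucc] at hfull
    rw [hU (Fin.last n) j.castSucc (Or.inl (by simp)), if_neg (Fin.ne_of_val_ne (by simp; omega)),
      mul_zero, add_zero] at hfull
    rw [hfull, Matrix.one_apply, Matrix.one_apply]
    simp [Fin.castSucc_inj]

end Embed

end St0Aux

/-- If `W` transforms on the left under `(N_{n+1}, ψ)` and on the right under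
`(J_m, ψ_m)` (expressed via the factorization `j = b̄ u`), and `W(diag(h,1)) ≠ 0` for
`h ∈ GL(n, ℚ_p)`, then `h ∈ N_n · B̄_{n,m}`. -/
theorem statement0 (p n m : ℕ) [Fact p.Prime] (hn : 1 ≤ n) (hm : 1 ≤ m)
    (ψ : AddChar ℚ_[p] ℂ)
    (hψtriv : ∀ x : ℚ_[p], ‖x‖ ≤ 1 → ψ x = 1)
    (hψnontriv : ∃ x : ℚ_[p], ‖x‖ ≤ (p : ℝ) ∧ ψ x ≠ 1)
    (W : GL (Fin (n + 1)) ℚ_[p] → ℂ)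
    (hW1 : ∀ u ∈ NN p (n + 1), ∀ g : GL (Fin (n + 1)) ℚ_[p],
      W (u * g) = ψ (superSum u.val) * W g)
    (hW2 : ∀ g : GL (Fin (n + 1)) ℚ_[p],
      ∀ b ∈ BBbar p (n + 1) ∩ Jm p (n + 1) m, ∀ u ∈ NN p (n + 1) ∩ Jm p (n + 1) m,
        W (g * (b * u)) = ψ (superSum u.val) * W g)
    (h : GL (Fin n) ℚ_[p]) (hne : W (embedGL h) ≠ 0) :
    ∃ u ∈ NN p n, ∃ b ∈ BBbar p n ∩ Jm p n m, h = u * b := by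
  obtain ⟨u, b, huNN, hbmem, huBD, hbBD, hfac⟩ :=
    St0Aux.key p n m hm ψ hψnontriv W hW1 hW2 n (le_refl n) (embedGL h)
      (St0Aux.embedGL_BDM h) hne
  refine ⟨St0Aux.truncGL u huBD, ?_, St0Aux.truncGL b hbBD, ⟨?_, ?_⟩, ?_⟩
  · constructor
    · intro i
      exact huNN.1 i.castSucc
    · intro i j hij
      exact huNN.2 i.castSucc j.castSucc (by rwa [Fin.castSucc_lt_castSucc_iff])
  · intro i j hij
    exact hbmem.1 i.castSucc j.castSucc (by rwa [Fin.castSucc_lt_castSucc_iff])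
  · rw [St0Aux.Jm_char]
    intro i j
    have hb := (St0Aux.Jm_char m b).mp hbmem.2 i.castSucc j.castSucc
    show ‖b.val i.castSucc j.castSucc - (if i = j then 1 else 0)‖ ≤ _
    have hδ : (if i = j then (1:ℚ_[p]) else 0) = (if i.castSucc = j.castSucc then 1 else 0) := by
      by_cases hh : i = j
      · rw [if_pos hh, if_pos (by rw [hh])]
      · rw [if_neg hh, if_neg (by rwa [Fin.castSucc_inj])]
    have he1 : ((i:ℕ):ℤ) = (((i.castSucc : Fin (n+1)):ℕ):ℤ) := by simp
    have he2 : ((j:ℕ):ℤ) = (((j.castSucc : Fin (n+1)):ℕ):ℤ) := by simp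
    rw [hδ, he1, he2]
    exact hb
  · apply Matrix.GeneralLinearGroup.ext
    intro i j
    show h.val i j = ((St0Aux.truncGL u huBD).val * (St0Aux.truncGL b hbBD).val) i j
    rw [Matrix.mul_apply]
    have hvals : (embedGL h).val = u.val * b.val := by rw [hfac, Units.val_mul]
    have hentry : h.val i j = (u.val * b.val) i.castSucc j.castSucc := by
      rw [← hvals, St0Aux.embedGL_val]
      exact (St0Aux.embed_cc p n h.val i j).symm
    have hfull : (u.val * b.val) i.castSucc j.castSucc
        = ∑ k : Fin (n+1), u.val i.castSucc k * b.val k j.castSucc := Matrix.mul_apply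
    rw [hentry, hfull, Fin.sum_univ_castSucc,
      huBD i.castSucc (Fin.last n) (Or.inr (by simp)),
      if_neg (Fin.ne_of_val_ne (by simp; omega)), zero_mul, add_zero]
    rfl

end
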